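/- Let P = {x ∈ ℝⁿ : b_l + A_l·x = 0 for l ∈ L, bᵢ + Aᵢ·x ≥ 0 for i ∈ I} be a nonempty polyhedron with I finite. Then the following are equivalent: (1) there exist x ∈ ℝⁿ and t > 0 such that b_l + A_l·x = 0 for all l ∈ L and bᵢ + Aᵢ·x ≥ t for all i ∈ I; (2) for every i ∈ I there exists a point x ∈ P with bᵢ + Aᵢ·x > 0 (i.e. no inequality of I is a hidden linearity). -/

import Mathlib

open Matrix

private lemma dot_sum {n : ℕ} {ι : Type*} (v : Fin n → ℝ) (s : Finset ι) (f : ι → Fin n → ℝ) :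
    v ⬝ᵥ ∑ i ∈ s, f i = ∑ i ∈ s, v ⬝ᵥ f i := by
  simp only [dotProduct, Finset.sum_apply, Finset.mul_sum]
  exact Finset.sum_comm

/-- Correctness of the linearity-testing LP (5): a nonempty polyhedron
`P = {x | b l + A l ⬝ᵥ x = 0 (l ∈ L), b i + A i ⬝ᵥ x ≥ 0 (i ∈ I)}` admits a point
satisfying all inequalities of `I` strictly by a common margin `t > 0` if and only if
no inequality of `I` is a hidden linearity (each one is strict at some point of `P`). -/
theorem lptest_correct {m n : ℕ} (A : Matrix (Fin m) (Fin n) ℝ) (b : Fin m → ℝ)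
    (L I : Finset (Fin m)) (hdisj : Disjoint L I) (hunion : L ∪ I = Finset.univ)
    (P : Set (Fin n → ℝ))
    (hP : P = {x | (∀ l ∈ L, b l + A l ⬝ᵥ x = 0) ∧ ∀ i ∈ I, 0 ≤ b i + A i ⬝ᵥ x})
    (hPne : P.Nonempty) :
    (∃ (x : Fin n → ℝ) (t : ℝ), 0 < t ∧ (∀ l ∈ L, b l + A l ⬝ᵥ x = 0) ∧
        ∀ i ∈ I, t ≤ b i + A i ⬝ᵥ x) ↔
      (∀ i ∈ I, ∃ x ∈ P, 0 < b i + A i ⬝ᵥ x) := by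
  subst hP
  constructor
  · rintro ⟨x, t, ht, hL, hI⟩ i hi
    exact ⟨x, ⟨hL, fun j hj => le_trans ht.le (hI j hj)⟩, lt_of_lt_of_le ht (hI i hi)⟩
  · intro h
    rcases I.eq_empty_or_nonempty with rfl | hIne
    · obtain ⟨x, hx⟩ := hPne
      exact ⟨x, 1, one_pos, hx.1, by simp⟩
    · choose f hfP hfpos using h
      -- extend f to all of Fin m
      obtain ⟨x0, hx0⟩ := hPne
      set g : Fin m → (Fin n → ℝ) := fun i => if hi : i ∈ I then f i hi else x0 with hg
      have hge : ∀ i (hi : i ∈ I), g i = f i hi := fun i hi => by rw [hg]; exact dif_pos hi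
      have hgP : ∀ i ∈ I, (∀ l ∈ L, b l + A l ⬝ᵥ g i = 0) ∧ ∀ j ∈ I, 0 ≤ b j + A j ⬝ᵥ g i := by
        intro i hi; rw [hge i hi]; exact hfP i hi
      have hgpos : ∀ i ∈ I, 0 < b i + A i ⬝ᵥ g i := by
        intro i hi; rw [hge i hi]; exact hfpos i hi
      have hcard : (0:ℝ) < I.card := by exact_mod_cast Finset.card_pos.mpr hIne
      set c : ℝ := (I.card : ℝ)⁻¹ with hc
      have hc0 : (I.card : ℝ) ≠ 0 := ne_of_gt hcard
      set x := c • ∑ i ∈ I, g i with hx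
      have key : ∀ r, b r + A r ⬝ᵥ x = c * ∑ i ∈ I, (b r + A r ⬝ᵥ g i) := by
        intro r
        rw [hx, dotProduct_smul, smul_eq_mul, dot_sum]
        simp only [mul_add, Finset.mul_sum, Finset.sum_add_distrib, Finset.sum_const,
          nsmul_eq_mul]
        have h1 : c * ((↑I.card : ℝ) * b r) = b r := by
          rw [hc, ← mul_assoc, inv_mul_cancel₀ hc0, one_mul]
        rw [h1]
      refine ⟨x, (c * I.inf' hIne (fun j => b j + A j ⬝ᵥ g j)), ?_, ?_, ?_⟩
      · apply mul_pos (inv_pos.mpr hcard)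
        exact (Finset.lt_inf'_iff hIne).mpr fun j hj => hgpos j hj
      · intro l hl
        rw [key l, Finset.sum_eq_zero, mul_zero]
        intro i hi; exact (hgP i hi).1 l hl
      · intro j hj
        rw [key j]
        have hcpos : (0:ℝ) < c := inv_pos.mpr hcard
        rw [mul_le_mul_iff_right₀ hcpos]
        calc I.inf' hIne (fun j => b j + A j ⬝ᵥ g j)
            ≤ b j + A j ⬝ᵥ g j := Finset.inf'_le _ hj
          _ ≤ ∑ i ∈ I, (b j + A j ⬝ᵥ g i) := by
              rw [← Finset.sum_erase_add _ _ hj]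
              have : 0 ≤ ∑ i ∈ I.erase j, (b j + A j ⬝ᵥ g i) :=
                Finset.sum_nonneg fun i hi => (hgP i (Finset.mem_of_mem_erase hi)).2 j hj
              linarith
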